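/- Let A = (A_1, …, A_n) : ℝ^n → ℝ^n be continuously differentiable with bounded Jacobian (|∇A_j(x)| ≤ M for all x and all j), and let V₁, V₂ : ℝ^n → ℝ be twice continuously differentiable with V₁ ≥ 0 and with all second derivatives of V₁ and V₂ bounded. Define m on ℝ^{2n} by m(x,ξ) = 1 + |ξ − A(x)|² + V₁(x) + |∇V₂(x)|². Then there exists C > 0 such that |∇m(X)| ≤ C·m(X)^{1/2} for all X = (x,ξ) ∈ ℝ^{2n}, and consequently m is an order function: there exists C' > 0 with m(X) ≤ C'·(1 + |X − Y|²)·m(Y) for all X, Y ∈ ℝ^{2n}. -/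

import Mathlib

noncomputable section
set_option linter.unnecessarySimpa false

open InnerProductSpace in
/-- The inverse of `toDual` over `ℝ`, as a continuous linear map. -/
def dualInvCLM (H : Type*) [NormedAddCommGroup H] [InnerProductSpace ℝ H]
    [CompleteSpace H] : (H →L[ℝ] ℝ) →L[ℝ] H :=
  LinearMap.mkContinuous
    { toFun := fun φ => (toDual ℝ H).symm φ
      map_add' := fun φ ψ => by simp
      map_smul' := fun c φ => by
        simpa [starRingEnd_apply] using (toDual ℝ H).symm.map_smul c φ }
    1 (fun φ => by simpa using ((toDual ℝ H).symm.norm_map φ).le)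

open InnerProductSpace in
lemma dualInvCLM_apply {H : Type*} [NormedAddCommGroup H] [InnerProductSpace ℝ H]
    [CompleteSpace H] (φ : H →L[ℝ] ℝ) : dualInvCLM H φ = (toDual ℝ H).symm φ := rfl

open InnerProductSpace in
lemma norm_dualInvCLM {H : Type*} [NormedAddCommGroup H] [InnerProductSpace ℝ H]
    [CompleteSpace H] (φ : H →L[ℝ] ℝ) : ‖dualInvCLM H φ‖ = ‖φ‖ :=
  (toDual ℝ H).symm.norm_map φ

open InnerProductSpace in
lemma gradient_hasFDerivAt_bound {H : Type*} [NormedAddCommGroup H]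
    [InnerProductSpace ℝ H] [CompleteSpace H] (V : H → ℝ) (hV : ContDiff ℝ 2 V) (x : H) :
    HasFDerivAt (gradient V) ((dualInvCLM H).comp (fderiv ℝ (fderiv ℝ V) x)) x := by
  have hfdiff : Differentiable ℝ (fderiv ℝ V) :=
    (hV.fderiv_right (m := 1) (by norm_num)).differentiable (by norm_num)
  exact (dualInvCLM H).hasFDerivAt.comp x ((hfdiff x).hasFDerivAt)

lemma norm_fderiv_fderiv_eq' {H : Type*} [NormedAddCommGroup H] [NormedSpace ℝ H]
    (V : H → ℝ) (z : H) : ‖fderiv ℝ (fderiv ℝ V) z‖ = ‖iteratedFDeriv ℝ 2 V z‖ := by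
  rw [← norm_iteratedFDeriv_fderiv (n := 1), ← norm_iteratedFDeriv_fderiv (n := 0),
    norm_iteratedFDeriv_zero]

lemma lip_of_fderiv' {E G : Type*} [NormedAddCommGroup E] [NormedSpace ℝ E]
    [NormedAddCommGroup G] [NormedSpace ℝ G] (f : E → G) (hf : Differentiable ℝ f)
    {M : ℝ} (h : ∀ x, ‖fderiv ℝ f x‖ ≤ M) (a b : E) : ‖f a - f b‖ ≤ M * ‖a - b‖ :=
  Convex.norm_image_sub_le_of_norm_fderiv_le (fun z _ => hf z) (fun z _ => h z)
    convex_univ trivial trivial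

lemma fderiv_lip' {H : Type*} [NormedAddCommGroup H] [NormedSpace ℝ H]
    (V : H → ℝ) (hV : ContDiff ℝ 2 V) {M : ℝ}
    (hM : ∀ z, ‖iteratedFDeriv ℝ 2 V z‖ ≤ M) (a b : H) :
    ‖fderiv ℝ V a - fderiv ℝ V b‖ ≤ M * ‖a - b‖ :=
  lip_of_fderiv' (fderiv ℝ V)
    ((hV.fderiv_right (m := 1) (by norm_num)).differentiable (by norm_num))
    (fun z => by rw [norm_fderiv_fderiv_eq']; exact hM z) a b

lemma taylor_quad' {H : Type*} [NormedAddCommGroup H] [NormedSpace ℝ H]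
    (V : H → ℝ) (hV : ContDiff ℝ 2 V) {M : ℝ}
    (hM : ∀ z, ‖iteratedFDeriv ℝ 2 V z‖ ≤ M) (x y : H) :
    |V y - V x - fderiv ℝ V x (y - x)| ≤ M * ‖y - x‖ ^ 2 := by
  have hM0 : 0 ≤ M := le_trans (norm_nonneg _) (hM x)
  have hdiffV : Differentiable ℝ V := hV.differentiable (by norm_num)
  set r := ‖y - x‖ with hr
  have key : ‖(V y - fderiv ℝ V x y) - (V x - fderiv ℝ V x x)‖ ≤ (M * r) * ‖y - x‖ := by
    refine (convex_closedBall x r).norm_image_sub_le_of_norm_hasFDerivWithin_le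
      (f := fun z => V z - fderiv ℝ V x z) (f' := fun z => fderiv ℝ V z - fderiv ℝ V x)
      (fun z _ => ((hdiffV z).hasFDerivAt.sub (fderiv ℝ V x).hasFDerivAt).hasFDerivWithinAt)
      (fun z hz => ?_) ?_ ?_
    · calc ‖fderiv ℝ V z - fderiv ℝ V x‖ ≤ M * ‖z - x‖ := fderiv_lip' V hV hM z x
        _ ≤ M * r := by
            have : ‖z - x‖ ≤ r := by simpa [dist_eq_norm] using hz
            exact mul_le_mul_of_nonneg_left this hM0
    · exact Metric.mem_closedBall_self (norm_nonneg _)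
    · simp [Metric.mem_closedBall, dist_eq_norm, hr]
  have heq : V y - V x - fderiv ℝ V x (y - x)
      = (V y - fderiv ℝ V x y) - (V x - fderiv ℝ V x x) := by
    rw [map_sub]; ring
  rw [heq, ← Real.norm_eq_abs]
  calc ‖_‖ ≤ (M * r) * ‖y - x‖ := key
    _ = M * ‖y - x‖ ^ 2 := by rw [hr]; ring

open InnerProductSpace in
lemma grad_sq_le' {H : Type*} [NormedAddCommGroup H] [InnerProductSpace ℝ H]
    [CompleteSpace H] (V : H → ℝ) (hV : ContDiff ℝ 2 V) {M : ℝ} (hMpos : 0 < M)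
    (hM : ∀ z, ‖iteratedFDeriv ℝ 2 V z‖ ≤ M) (hVpos : ∀ z, 0 ≤ V z) (x : H) :
    ‖fderiv ℝ V x‖ ^ 2 ≤ 4 * M * V x := by
  set u := gradient V x with hu
  have hnorm : ‖fderiv ℝ V x‖ = ‖u‖ := by
    rw [hu, gradient]; exact ((toDual ℝ H).symm.norm_map _).symm
  have happ : ∀ w, fderiv ℝ V x w = inner ℝ u w := by
    intro w
    have : toDual ℝ H u = fderiv ℝ V x := by
      rw [hu, gradient, LinearIsometryEquiv.apply_symm_apply]
    rw [← this, toDual_apply_apply]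
  set t : ℝ := 1 / (2 * M) with ht
  have ht0 : 0 < t := by positivity
  set y := x - t • u with hy
  have h1 := taylor_quad' V hV hM x y
  have h2 : y - x = -(t • u) := by rw [hy]; abel
  have h3 : fderiv ℝ V x (y - x) = -(t * ‖u‖ ^ 2) := by
    rw [h2, map_neg, map_smul, happ, real_inner_self_eq_norm_sq]
    simp [smul_eq_mul]
  have h4 : ‖y - x‖ ^ 2 = t ^ 2 * ‖u‖ ^ 2 := by
    rw [h2, norm_neg, norm_smul, Real.norm_eq_abs, abs_of_pos ht0, mul_pow]
  rw [h3, h4] at h1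
  rw [sub_neg_eq_add] at h1
  have h6 : V y - V x + t * ‖u‖ ^ 2 ≤ M * (t ^ 2 * ‖u‖ ^ 2) := le_trans (le_abs_self _) h1
  rw [hnorm]
  have hMt : M * t ^ 2 = t / 2 := by rw [ht]; field_simp
  have h7 : t * ‖u‖ ^ 2 / 2 ≤ V x := by nlinarith [hVpos y]
  have h8 : (4 * M) * (t * ‖u‖ ^ 2 / 2) ≤ (4 * M) * V x :=
    mul_le_mul_of_nonneg_left h7 (by positivity)
  have h9 : (4 * M) * (t * ‖u‖ ^ 2 / 2) = ‖u‖ ^ 2 := by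
    rw [ht]; field_simp; ring
  linarith

/-- Phase space `ℝ^{2n} = ℝ^n_x × ℝ^n_ξ`, with the Euclidean (`L²`) norm. -/
abbrev PhaseSpace (n : ℕ) :=
  WithLp 2 (EuclideanSpace ℝ (Fin n) × EuclideanSpace ℝ (Fin n))

/-- The position variable `x` of a phase space point `X = (x, ξ)`. -/
def posPart {n : ℕ} (X : PhaseSpace n) : EuclideanSpace ℝ (Fin n) :=
  (WithLp.equiv 2 (EuclideanSpace ℝ (Fin n) × EuclideanSpace ℝ (Fin n)) X).1

/-- The momentum variable `ξ` of a phase space point `X = (x, ξ)`. -/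
def momPart {n : ℕ} (X : PhaseSpace n) : EuclideanSpace ℝ (Fin n) :=
  (WithLp.equiv 2 (EuclideanSpace ℝ (Fin n) × EuclideanSpace ℝ (Fin n)) X).2

def Lpos (n : ℕ) : PhaseSpace n →L[ℝ] EuclideanSpace ℝ (Fin n) :=
  (ContinuousLinearMap.fst ℝ (EuclideanSpace ℝ (Fin n)) (EuclideanSpace ℝ (Fin n))).comp
    (WithLp.prodContinuousLinearEquiv 2 ℝ (EuclideanSpace ℝ (Fin n))
      (EuclideanSpace ℝ (Fin n))).toContinuousLinearMap

def Lmom (n : ℕ) : PhaseSpace n →L[ℝ] EuclideanSpace ℝ (Fin n) :=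
  (ContinuousLinearMap.snd ℝ (EuclideanSpace ℝ (Fin n)) (EuclideanSpace ℝ (Fin n))).comp
    (WithLp.prodContinuousLinearEquiv 2 ℝ (EuclideanSpace ℝ (Fin n))
      (EuclideanSpace ℝ (Fin n))).toContinuousLinearMap

lemma norm_Lpos_le {n : ℕ} (X : PhaseSpace n) : ‖Lpos n X‖ ≤ ‖X‖ := by
  have h1 : ‖Lpos n X‖ ^ 2 ≤ ‖X‖ ^ 2 := by
    rw [WithLp.prod_norm_sq_eq_of_L2]
    have : Lpos n X = X.fst := rfl
    rw [this]; nlinarith [sq_nonneg ‖X.snd‖]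
  have := Real.sqrt_le_sqrt h1
  rwa [Real.sqrt_sq (norm_nonneg _), Real.sqrt_sq (norm_nonneg _)] at this

lemma norm_Lmom_le {n : ℕ} (X : PhaseSpace n) : ‖Lmom n X‖ ≤ ‖X‖ := by
  have h1 : ‖Lmom n X‖ ^ 2 ≤ ‖X‖ ^ 2 := by
    rw [WithLp.prod_norm_sq_eq_of_L2]
    have : Lmom n X = X.snd := rfl
    rw [this]; nlinarith [sq_nonneg ‖X.fst‖]
  have := Real.sqrt_le_sqrt h1
  rwa [Real.sqrt_sq (norm_nonneg _), Real.sqrt_sq (norm_nonneg _)] at this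

set_option maxHeartbeats 2000000 in
/-- for `m(x,ξ) = 1 + |ξ - A(x)|² + V₁(x) + |∇V₂(x)|²`, with `A` having
bounded Jacobian, `V₁ ≥ 0`, and the second derivatives of `V₁, V₂` bounded, one has
`|∇m| ≤ C m^{1/2}`, and consequently `m` is an order function. -/
theorem weight_is_order_function
    (n : ℕ) (A : EuclideanSpace ℝ (Fin n) → EuclideanSpace ℝ (Fin n))
    (V₁ V₂ : EuclideanSpace ℝ (Fin n) → ℝ) (M : ℝ) (hM : 0 < M)
    (hA : ContDiff ℝ 1 A) (hA' : ∀ x, ‖fderiv ℝ A x‖ ≤ M)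
    (hV₁ : ContDiff ℝ 2 V₁) (hV₂ : ContDiff ℝ 2 V₂)
    (hV₁pos : ∀ x, 0 ≤ V₁ x)
    (hV₁'' : ∀ x, ‖iteratedFDeriv ℝ 2 V₁ x‖ ≤ M)
    (hV₂'' : ∀ x, ‖iteratedFDeriv ℝ 2 V₂ x‖ ≤ M)
    (m : PhaseSpace n → ℝ)
    (hm : ∀ X, m X = 1 + ‖momPart X - A (posPart X)‖ ^ 2 + V₁ (posPart X)
        + ‖gradient V₂ (posPart X)‖ ^ 2) :
    (∃ C > 0, ∀ X, ‖gradient m X‖ ≤ C * (m X) ^ ((1 : ℝ)/2)) ∧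
    (∃ C' > 0, ∀ X Y : PhaseSpace n, m X ≤ C' * (1 + ‖X - Y‖ ^ 2) * m Y) := by
  classical
  have hM0 : (0:ℝ) ≤ M := hM.le
  have hAdiff : Differentiable ℝ A := hA.differentiable (by norm_num)
  have hV₁diff : Differentiable ℝ V₁ := hV₁.differentiable (by norm_num)
  have hV₂diff : Differentiable ℝ V₂ := hV₂.differentiable (by norm_num)
  have hfV₂diff : Differentiable ℝ (fderiv ℝ V₂) :=
    (hV₂.fderiv_right (m := 1) (by norm_num)).differentiable (by norm_num)
  -- Lipschitz bound for A
  have hAlip : ∀ a b, ‖A a - A b‖ ≤ M * ‖a - b‖ := lip_of_fderiv' A hAdiff hA'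
  -- Lipschitz bound for gradient V₂
  have hgradlip : ∀ a b, ‖gradient V₂ a - gradient V₂ b‖ ≤ M * ‖a - b‖ := by
    intro a b
    have : gradient V₂ a - gradient V₂ b
        = dualInvCLM (EuclideanSpace ℝ (Fin n)) (fderiv ℝ V₂ a - fderiv ℝ V₂ b) := by
      rw [map_sub]; rfl
    rw [this, norm_dualInvCLM]
    exact fderiv_lip' V₂ hV₂ hV₂'' a b
  -- pointwise bound on m's components
  have hm_nonneg : ∀ X, 1 ≤ m X := by
    intro X
    rw [hm X]
    nlinarith [sq_nonneg ‖momPart X - A (posPart X)‖, hV₁pos (posPart X),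
      sq_nonneg ‖gradient V₂ (posPart X)‖]
  have hgV₁ : ∀ z, ‖fderiv ℝ V₁ z‖ ^ 2 ≤ 4 * M * V₁ z :=
    grad_sq_le' V₁ hV₁ hM hV₁'' hV₁pos
  constructor
  · -- gradient bound
    refine ⟨2 * (1 + M) + 2 * Real.sqrt M + 2 * M, by positivity, fun X => ?_⟩
    set x : EuclideanSpace ℝ (Fin n) := Lpos n X with hx
    set q : EuclideanSpace ℝ (Fin n) := Lmom n X - A x with hq
    set g : EuclideanSpace ℝ (Fin n) := gradient V₂ x with hg
    set s : ℝ := Real.sqrt (m X) with hs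
    have hs0 : 0 ≤ s := Real.sqrt_nonneg _
    have hmX : m X = 1 + ‖q‖ ^ 2 + V₁ x + ‖g‖ ^ 2 := hm X
    have hmX0 : 0 ≤ m X := le_trans zero_le_one (hm_nonneg X)
    have hqs : ‖q‖ ≤ s := by
      rw [hs]
      have : ‖q‖ = Real.sqrt (‖q‖ ^ 2) := (Real.sqrt_sq (norm_nonneg _)).symm
      rw [this]
      apply Real.sqrt_le_sqrt
      nlinarith [hV₁pos x, sq_nonneg ‖g‖]
    have hgs : ‖g‖ ≤ s := by
      rw [hs]
      have : ‖g‖ = Real.sqrt (‖g‖ ^ 2) := (Real.sqrt_sq (norm_nonneg _)).symm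
      rw [this]
      apply Real.sqrt_le_sqrt
      nlinarith [hV₁pos x, sq_nonneg ‖q‖]
    have hV₁s : ‖fderiv ℝ V₁ x‖ ≤ 2 * Real.sqrt M * s := by
      have h1 : ‖fderiv ℝ V₁ x‖ = Real.sqrt (‖fderiv ℝ V₁ x‖ ^ 2) :=
        (Real.sqrt_sq (norm_nonneg _)).symm
      rw [h1]
      have h2 : ‖fderiv ℝ V₁ x‖ ^ 2 ≤ 4 * M * V₁ x := hgV₁ x
      have h3 : (4 : ℝ) * M * V₁ x ≤ (2 * Real.sqrt M * s) ^ 2 := by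
        have : Real.sqrt M ^ 2 = M := Real.sq_sqrt hM0
        have hsm : s ^ 2 = m X := Real.sq_sqrt hmX0
        nlinarith [hV₁pos x, sq_nonneg ‖q‖, sq_nonneg ‖g‖]
      calc Real.sqrt (‖fderiv ℝ V₁ x‖ ^ 2) ≤ Real.sqrt ((2 * Real.sqrt M * s) ^ 2) :=
            Real.sqrt_le_sqrt (le_trans h2 h3)
        _ = 2 * Real.sqrt M * s := Real.sqrt_sq (by positivity)
    -- the derivative of m
    set D₁ : PhaseSpace n →L[ℝ] EuclideanSpace ℝ (Fin n) := Lmom n - (fderiv ℝ A x).comp (Lpos n) with hD₁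
    set Dg₂ : PhaseSpace n →L[ℝ] EuclideanSpace ℝ (Fin n) :=
      ((dualInvCLM (EuclideanSpace ℝ (Fin n))).comp
        (fderiv ℝ (fderiv ℝ V₂) x)).comp (Lpos n) with hDg₂
    set D : PhaseSpace n →L[ℝ] ℝ :=
      (2 • (innerSL ℝ q).comp D₁) + (fderiv ℝ V₁ x).comp (Lpos n)
        + (2 • (innerSL ℝ g).comp Dg₂) with hD
    have hg₁ : HasFDerivAt (fun X : PhaseSpace n => Lmom n X - A (Lpos n X)) D₁ X :=
      ((Lmom n).hasFDerivAt).sub (((hAdiff x).hasFDerivAt).comp X (Lpos n).hasFDerivAt)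
    have ht₁ : HasFDerivAt (fun X : PhaseSpace n => ‖Lmom n X - A (Lpos n X)‖ ^ 2)
        (2 • (innerSL ℝ q).comp D₁) X := hg₁.norm_sq
    have ht₂ : HasFDerivAt (fun X : PhaseSpace n => V₁ (Lpos n X))
        ((fderiv ℝ V₁ x).comp (Lpos n)) X :=
      ((hV₁diff x).hasFDerivAt).comp X (Lpos n).hasFDerivAt
    have hg₂ : HasFDerivAt (fun X : PhaseSpace n => gradient V₂ (Lpos n X)) Dg₂ X :=
      by have h := (gradient_hasFDerivAt_bound V₂ hV₂ x).comp X (Lpos n).hasFDerivAt; exact h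
    have ht₃ : HasFDerivAt (fun X : PhaseSpace n => ‖gradient V₂ (Lpos n X)‖ ^ 2)
        (2 • (innerSL ℝ g).comp Dg₂) X := hg₂.norm_sq
    have hmD : HasFDerivAt m D X := by
      have hmfun : m = fun X : PhaseSpace n => 1 + ‖Lmom n X - A (Lpos n X)‖ ^ 2
          + V₁ (Lpos n X) + ‖gradient V₂ (Lpos n X)‖ ^ 2 := funext fun X => hm X
      rw [hmfun, hD]
      exact ((ht₁.const_add 1).add ht₂).add ht₃
    have hgradm : ‖gradient m X‖ = ‖D‖ := by
      set_option synthInstance.maxHeartbeats 400000 in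
      rw [gradient, hmD.fderiv]
      exact (InnerProductSpace.toDual ℝ (PhaseSpace n)).symm.norm_map _
    have hDbound : ‖D‖ ≤ (2 * (1 + M) + 2 * Real.sqrt M + 2 * M) * s := by
      apply ContinuousLinearMap.opNorm_le_bound _ (by positivity)
      intro v
      have hD₁v : ‖D₁ v‖ ≤ (1 + M) * ‖v‖ := by
        rw [hD₁]
        calc ‖(Lmom n - (fderiv ℝ A x).comp (Lpos n)) v‖
            = ‖Lmom n v - fderiv ℝ A x (Lpos n v)‖ := rfl
          _ ≤ ‖Lmom n v‖ + ‖fderiv ℝ A x (Lpos n v)‖ := norm_sub_le _ _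
          _ ≤ ‖v‖ + M * ‖v‖ := by
              gcongr
              · exact norm_Lmom_le v
              · calc ‖fderiv ℝ A x (Lpos n v)‖ ≤ ‖fderiv ℝ A x‖ * ‖Lpos n v‖ :=
                    (fderiv ℝ A x).le_opNorm _
                  _ ≤ M * ‖v‖ := by
                      apply mul_le_mul (hA' x) (norm_Lpos_le v) (norm_nonneg _) hM0
          _ = (1 + M) * ‖v‖ := by ring
      have hDg₂v : ‖Dg₂ v‖ ≤ M * ‖v‖ := by
        rw [hDg₂]
        have : ‖(((dualInvCLM (EuclideanSpace ℝ (Fin n))).comp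
            (fderiv ℝ (fderiv ℝ V₂) x)).comp (Lpos n)) v‖
            = ‖fderiv ℝ (fderiv ℝ V₂) x (Lpos n v)‖ := by
          rw [ContinuousLinearMap.comp_apply, ContinuousLinearMap.comp_apply,
            norm_dualInvCLM]
        rw [this]
        calc ‖fderiv ℝ (fderiv ℝ V₂) x (Lpos n v)‖
            ≤ ‖fderiv ℝ (fderiv ℝ V₂) x‖ * ‖Lpos n v‖ := (fderiv ℝ (fderiv ℝ V₂) x).le_opNorm _
          _ ≤ M * ‖v‖ := by
              apply mul_le_mul _ (norm_Lpos_le v) (norm_nonneg _) hM0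
              rw [norm_fderiv_fderiv_eq']; exact hV₂'' x
      have hDv : D v = 2 * inner ℝ q (D₁ v) + fderiv ℝ V₁ x (Lpos n v) + 2 * inner ℝ g (Dg₂ v) := by
        rw [hD]
        simp [ContinuousLinearMap.add_apply, ContinuousLinearMap.smul_apply,
          ContinuousLinearMap.comp_apply, innerSL_apply_apply, two_smul]
        ring
      rw [Real.norm_eq_abs, hDv]
      have hb1 : |2 * inner ℝ q (D₁ v)| ≤ 2 * s * ((1 + M) * ‖v‖) := by
        rw [abs_mul, abs_two]
        have := abs_real_inner_le_norm q (D₁ v)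
        have h' : ‖q‖ * ‖D₁ v‖ ≤ s * ((1 + M) * ‖v‖) :=
          mul_le_mul hqs hD₁v (norm_nonneg _) hs0
        nlinarith [abs_nonneg (inner ℝ q (D₁ v) : ℝ)]
      have hb2 : |fderiv ℝ V₁ x (Lpos n v)| ≤ 2 * Real.sqrt M * s * ‖v‖ := by
        calc |fderiv ℝ V₁ x (Lpos n v)| ≤ ‖fderiv ℝ V₁ x‖ * ‖Lpos n v‖ := by
              rw [← Real.norm_eq_abs]; exact (fderiv ℝ V₁ x).le_opNorm _
          _ ≤ (2 * Real.sqrt M * s) * ‖v‖ :=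
              mul_le_mul hV₁s (norm_Lpos_le v) (norm_nonneg _) (by positivity)
      have hb3 : |2 * inner ℝ g (Dg₂ v)| ≤ 2 * s * (M * ‖v‖) := by
        rw [abs_mul, abs_two]
        have := abs_real_inner_le_norm g (Dg₂ v)
        have h' : ‖g‖ * ‖Dg₂ v‖ ≤ s * (M * ‖v‖) :=
          mul_le_mul hgs hDg₂v (norm_nonneg _) hs0
        nlinarith [abs_nonneg (inner ℝ g (Dg₂ v) : ℝ)]
      calc |2 * inner ℝ q (D₁ v) + fderiv ℝ V₁ x (Lpos n v) + 2 * inner ℝ g (Dg₂ v)|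
          ≤ |2 * inner ℝ q (D₁ v)| + |fderiv ℝ V₁ x (Lpos n v)| + |2 * inner ℝ g (Dg₂ v)| := by
            exact (abs_add_le _ _).trans (by gcongr; exact abs_add_le _ _)
        _ ≤ 2 * s * ((1 + M) * ‖v‖) + 2 * Real.sqrt M * s * ‖v‖ + 2 * s * (M * ‖v‖) := by
            linarith
        _ = (2 * (1 + M) + 2 * Real.sqrt M + 2 * M) * s * ‖v‖ := by ring
    have : (m X) ^ ((1 : ℝ)/2) = s := by rw [hs, Real.sqrt_eq_rpow]
    rw [hgradm, this]
    exact hDbound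
  · -- order function
    refine ⟨2 * (1 + M) ^ 2 + 2 * M + 2 * M ^ 2 + 2, by positivity, fun X Y => ?_⟩
    set x := posPart X with hxdef
    set ξ := momPart X
    set y := posPart Y
    set η := momPart Y
    set r : ℝ := ‖X - Y‖ with hrdef
    have hr0 : 0 ≤ r := norm_nonneg _
    have hxy : ‖x - y‖ ≤ r := by
      have h1 : x - y = Lpos n (X - Y) := rfl
      rw [h1, hrdef]
      exact norm_Lpos_le (X - Y)
    have hξη : ‖ξ - η‖ ≤ r := by
      have h1 : ξ - η = Lmom n (X - Y) := rfl
      rw [h1, hrdef]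
      exact norm_Lmom_le (X - Y)
    -- bound for the first term
    have h1 : ‖ξ - A x‖ ≤ ‖η - A y‖ + (1 + M) * r := by
      have heq : ξ - A x = (η - A y) + (ξ - η) + (A y - A x) := by abel
      calc ‖ξ - A x‖ = ‖(η - A y) + (ξ - η) + (A y - A x)‖ := by rw [heq]
        _ ≤ ‖(η - A y) + (ξ - η)‖ + ‖A y - A x‖ := norm_add_le _ _
        _ ≤ ‖η - A y‖ + ‖ξ - η‖ + ‖A y - A x‖ := by gcongr; exact norm_add_le _ _
        _ ≤ ‖η - A y‖ + r + M * ‖y - x‖ := by gcongr; exact hAlip y x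
        _ ≤ ‖η - A y‖ + r + M * r := by
            gcongr
            rw [← neg_sub x y, norm_neg]; exact hxy
        _ = ‖η - A y‖ + (1 + M) * r := by ring
    have h1sq : ‖ξ - A x‖ ^ 2 ≤ 2 * ‖η - A y‖ ^ 2 + 2 * (1 + M) ^ 2 * r ^ 2 := by
      have := pow_le_pow_left₀ (norm_nonneg (ξ - A x)) h1 2
      nlinarith [sq_nonneg (‖η - A y‖ - (1 + M) * r), norm_nonneg (η - A y), hr0, hM0]
    -- bound for V₁
    have h2 : V₁ x ≤ 2 * V₁ y + 2 * M * r ^ 2 := by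
      have ht := taylor_quad' V₁ hV₁ hV₁'' y x
      have htu : V₁ x - V₁ y - fderiv ℝ V₁ y (x - y) ≤ M * ‖x - y‖ ^ 2 :=
        le_trans (le_abs_self _) ht
      set p := ‖fderiv ℝ V₁ y‖ with hp
      set ρ := ‖x - y‖ with hρ
      have hp2 : p ^ 2 ≤ 4 * M * V₁ y := hgV₁ y
      have happ : fderiv ℝ V₁ y (x - y) ≤ p * ρ := by
        calc fderiv ℝ V₁ y (x - y) ≤ |fderiv ℝ V₁ y (x - y)| := le_abs_self _
          _ ≤ p * ρ := by rw [← Real.norm_eq_abs]; exact (fderiv ℝ V₁ y).le_opNorm _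
      have hk1 : 4 * M * (p * ρ) ≤ 4 * M * (V₁ y + M * ρ ^ 2) := by
        nlinarith [sq_nonneg (p - 2 * M * ρ)]
      have hk2 : p * ρ ≤ V₁ y + M * ρ ^ 2 :=
        le_of_mul_le_mul_left hk1 (by positivity)
      have hρr : ρ ^ 2 ≤ r ^ 2 := by
        apply pow_le_pow_left₀ (norm_nonneg _) hxy
      nlinarith [hM0]
    -- bound for gradient V₂
    have h3 : ‖gradient V₂ x‖ ≤ ‖gradient V₂ y‖ + M * r := by
      calc ‖gradient V₂ x‖ = ‖gradient V₂ y + (gradient V₂ x - gradient V₂ y)‖ := by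
            congr 1; abel
        _ ≤ ‖gradient V₂ y‖ + ‖gradient V₂ x - gradient V₂ y‖ := norm_add_le _ _
        _ ≤ ‖gradient V₂ y‖ + M * ‖x - y‖ := by gcongr; exact hgradlip x y
        _ ≤ ‖gradient V₂ y‖ + M * r := by gcongr
    have h3sq : ‖gradient V₂ x‖ ^ 2 ≤ 2 * ‖gradient V₂ y‖ ^ 2 + 2 * M ^ 2 * r ^ 2 := by
      have := pow_le_pow_left₀ (norm_nonneg (gradient V₂ x)) h3 2
      nlinarith [sq_nonneg (‖gradient V₂ y‖ - M * r), norm_nonneg (gradient V₂ y), hr0, hM0]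
    have hmXe : m X = 1 + ‖ξ - A x‖ ^ 2 + V₁ x + ‖gradient V₂ x‖ ^ 2 := hm X
    have hmYe : m Y = 1 + ‖η - A y‖ ^ 2 + V₁ y + ‖gradient V₂ y‖ ^ 2 := hm Y
    have hmY1 : 1 ≤ m Y := hm_nonneg Y
    set K : ℝ := 2 * (1 + M) ^ 2 + 2 * M + 2 * M ^ 2 with hK
    have hK0 : 0 ≤ K := by positivity
    have hstep : m X ≤ 2 * m Y + K * r ^ 2 := by
      rw [hmXe, hmYe, hK]
      nlinarith [hV₁pos y, sq_nonneg ‖η - A y‖, sq_nonneg ‖gradient V₂ y‖]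
    calc m X ≤ 2 * m Y + K * r ^ 2 := hstep
      _ ≤ (K + 2) * (1 + r ^ 2) * m Y := by
          nlinarith [mul_nonneg (sub_nonneg.mpr hmY1) (sq_nonneg r), hmY1, sq_nonneg r]
      _ = (2 * (1 + M) ^ 2 + 2 * M + 2 * M ^ 2 + 2) * (1 + ‖X - Y‖ ^ 2) * m Y := by
          rw [hK, hrdef]
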